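/- For any word v over {x,y}, the polynomial 1 + Σ_T ((t+1)/t)^{κ(v^T)} t^{|T|+1} (sum over subsets T of positions of v) equals 1 + Σ (t+1)^k, where the second sum ranges over all factorizations v = u_1 · u_2 ··· u_k into k ≥ 1 factors such that each of u_1,...,u_{k-1} has the form x^i y or y^i x for some i ≥ 0, and u_k is arbitrary (possibly empty). -/

import Mathlib

/-- `κ(w) = 2 + #{i : w_i ≠ w_{i+1}}` for nonempty `w`, and `κ(empty) = 1`. -/
def kappa (w : List Bool) : ℕ :=
  if w = [] then 1 else 2 + (w.zip w.tail).countP (fun p => p.1 != p.2)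

/-- The subword of `v` at the (1-indexed) positions in `T`. -/
def subword (v : List Bool) (T : Finset ℕ) : List Bool :=
  (v.zipIdx.filter (fun p => decide (p.2 + 1 ∈ T))).map Prod.fst

/-- The `f`-polynomial `F_v(t) = 1 + ∑_{T ⊆ [|v|]} ((t+1)/t)^{κ(v^T)} t^{|T|+1}`,
written with the power of `t` as `t^{|T|+1-κ(v^T)}` (valid since `κ(v^T) ≤ |T|+1`). -/
noncomputable def fPoly (v : List Bool) : Polynomial ℤ :=
  1 + ∑ T ∈ (Finset.Icc 1 v.length).powerset,
      (Polynomial.X + 1) ^ kappa (subword v T) *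
        Polynomial.X ^ (T.card + 1 - kappa (subword v T))

/-- A word of the form `x^i y` or `y^i x` (with `x = false`, `y = true`). -/
def GoodFactor (w : List Bool) : Prop :=
  (∃ i, w = List.replicate i false ++ [true]) ∨
  (∃ i, w = List.replicate i true ++ [false])


open Polynomial List

lemma kappa_nil : kappa [] = 1 := rfl

lemma kappa_cons (c : Bool) (w : List Bool) :
    kappa (c :: w) = if w.head? = some c then kappa w else kappa w + 1 := by
  match w with
  | [] => simp [kappa]
  | b :: l =>
      have h1 : kappa (c :: b :: l) = kappa (b :: l) + (if (c != b) = true then 1 else 0) := by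
        simp only [kappa, if_neg (List.cons_ne_nil _ _)]
        have h2 : (c :: b :: l).zip (c :: b :: l).tail = (c, b) :: ((b :: l).zip (b :: l).tail) := by
          simp [List.zip]
        rw [h2, List.countP_cons]
        simp only [show ((c, b).1 != (c, b).2) = (c != b) from rfl]
        omega
      rw [h1, List.head?_cons]
      by_cases h : b = c
      · subst h; simp
      · have hbne : (c != b) = true := by
          simpa using Ne.symm h
        rw [if_pos hbne, if_neg (show ¬(some b = some c) by simpa using h)]

lemma kappa_le (w : List Bool) : kappa w ≤ w.length + 1 := by
  induction w with
  | nil => simp [kappa]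
  | cons c w ih =>
      rw [kappa_cons]
      split <;> simp <;> omega

noncomputable def gg (w : List Bool) : Polynomial ℤ :=
  (X + 1) ^ kappa w * X ^ (w.length + 1 - kappa w)

lemma gg_nil : gg [] = X + 1 := by simp [gg, kappa]

lemma gg_cons (c : Bool) (w : List Bool) :
    gg (c :: w) = if w.head? = some c then X * gg w else (X + 1) * gg w := by
  have hle := kappa_le w
  rw [gg, gg, kappa_cons]
  split
  · have : w.length + 1 + 1 - kappa w = (w.length + 1 - kappa w) + 1 := by omega
    simp only [List.length_cons, this, pow_succ]
    ring
  · have : w.length + 1 + 1 - (kappa w + 1) = w.length + 1 - kappa w := by omega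
    simp only [List.length_cons, this, pow_succ]
    ring

noncomputable def Fp (v : List Bool) : Polynomial ℤ := (v.sublists'.map gg).sum

noncomputable def Bp (v : List Bool) (a : Bool) : Polynomial ℤ :=
  (v.sublists'.map (fun w => if w.head? = some a then 0 else gg w)).sum

lemma Fp_nil : Fp [] = X + 1 := by simp [Fp, gg_nil]

lemma Bp_nil (a : Bool) : Bp [] a = X + 1 := by simp [Bp, gg_nil]

lemma Fp_cons (c : Bool) (v : List Bool) :
    Fp (c :: v) = (X + 1) * Fp v + Bp v c := by
  rw [Fp, List.sublists'_cons, List.map_append, List.sum_append, List.map_map]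
  have : ∀ w : List Bool, (gg ∘ List.cons c) w
      = X * gg w + (if w.head? = some c then 0 else gg w) := by
    intro w
    simp only [Function.comp, gg_cons]
    split <;> ring
  rw [List.map_congr_left (fun w _ => this w)]
  have hsplit : (List.map (fun w => X * gg w + (if w.head? = some c then 0 else gg w)) v.sublists').sum
      = X * (v.sublists'.map gg).sum + Bp v c := by
    rw [List.sum_map_add, List.sum_map_mul_left]
    rfl
  rw [hsplit]
  rw [Fp, Bp]
  ring

lemma Bp_cons_same (c : Bool) (v : List Bool) : Bp (c :: v) c = Bp v c := by
  rw [Bp, List.sublists'_cons, List.map_append, List.sum_append, List.map_map]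
  have : ∀ w : List Bool, ((fun w => if w.head? = some c then 0 else gg w) ∘ List.cons c) w
      = (0 : Polynomial ℤ) := by
    intro w; simp [Function.comp]
  rw [List.map_congr_left (fun w _ => this w)]
  simp [Bp]

lemma Bp_cons_ne (c a : Bool) (v : List Bool) (h : a ≠ c) :
    Bp (c :: v) a = Bp v a + (X * Fp v + Bp v c) := by
  rw [Bp, List.sublists'_cons, List.map_append, List.sum_append, List.map_map]
  have : ∀ w : List Bool, ((fun w => if w.head? = some a then 0 else gg w) ∘ List.cons c) w
      = X * gg w + (if w.head? = some c then 0 else gg w) := by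
    intro w
    simp only [Function.comp]; rw [List.head?_cons]
    rw [if_neg (by simpa using (Ne.symm h)), gg_cons]
    split <;> ring
  rw [List.map_congr_left (fun w _ => this w)]
  have hsplit : (List.map (fun w => X * gg w + (if w.head? = some c then 0 else gg w)) v.sublists').sum
      = X * (v.sublists'.map gg).sum + Bp v c := by
    rw [List.sum_map_add, List.sum_map_mul_left]
    rfl
  rw [hsplit]
  rfl

lemma Bp_add (v : List Bool) (a c : Bool) (h : a ≠ c) :
    Bp v a + Bp v c = Fp v + (X + 1) := by
  rw [Bp, Bp, Fp, ← List.sum_map_add]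
  have key : ∀ w : List Bool,
      ((if w.head? = some a then 0 else gg w) + (if w.head? = some c then 0 else gg w))
      = gg w + (if w = [] then gg w else 0) := by
    intro w
    match w with
    | [] => simp
    | b :: l =>
        simp only [if_neg (List.cons_ne_nil _ _), add_zero]; rw [List.head?_cons]
        rcases Bool.eq_or_eq_not b a with rfl | rfl
        · rw [if_pos rfl, if_neg (by simpa using h)]; ring
        · rw [if_neg (by simp [Bool.eq_not_iff]), if_pos]
          · ring
          · congr 1
            cases a <;> cases c <;> simp_all
  rw [List.map_congr_left (fun w _ => key w)]
  rw [List.sum_map_add]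
  congr 1
  -- remaining: sum over sublists' of (if w = [] then gg w else 0) = X + 1
  induction v with
  | nil => simp [gg_nil]
  | cons b v ih =>
      rw [List.sublists'_cons, List.map_append, List.sum_append, ih, List.map_map]
      have : ∀ w : List Bool, ((fun w => if w = [] then gg w else 0) ∘ List.cons b) w = (0 : Polynomial ℤ) := by
        intro w; simp [Function.comp]
      rw [List.map_congr_left (fun w _ => this w)]
      simp

lemma enum_concat (v : List Bool) (c : Bool) :
    (v ++ [c]).zipIdx = v.zipIdx ++ [(c, v.length)] := by
  simp [List.zipIdx_append]

lemma mem_enum_fst_lt {v : List Bool} {p : Bool × ℕ} (h : p ∈ v.zipIdx) : p.2 < v.length := by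
  have := List.snd_lt_add_of_mem_zipIdx h
  simpa using this

lemma subword_concat_not_mem {v : List Bool} {c : Bool} {T : Finset ℕ}
    (hT : T ⊆ Finset.Icc 1 v.length) :
    subword (v ++ [c]) T = subword v T := by
  rw [subword, subword, enum_concat, List.filter_append]
  have : List.filter (fun p => decide (p.2 + 1 ∈ T)) [(c, v.length)] = [] := by
    simp only [List.filter_cons, List.filter_nil]
    rw [if_neg]
    simp only [decide_eq_true_eq]
    intro hmem
    have := hT hmem
    simp [Finset.mem_Icc] at this
  rw [this, List.append_nil]

lemma subword_concat_mem {v : List Bool} {c : Bool} {T : Finset ℕ}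
    (hT : T ⊆ Finset.Icc 1 v.length) :
    subword (v ++ [c]) (insert (v.length + 1) T) = subword v T ++ [c] := by
  rw [subword, subword, enum_concat, List.filter_append, List.map_append]
  congr 1
  · congr 1
    apply List.filter_congr
    intro p hp
    have hlt := mem_enum_fst_lt hp
    simp only [decide_eq_decide, Finset.mem_insert]
    constructor
    · rintro (h | h)
      · omega
      · exact h
    · intro h
      exact Or.inr h
  · simp

lemma powerset_sum_eq_sublists_sum (v : List Bool) (G : List Bool → ℕ → Polynomial ℤ) :
    ∑ T ∈ (Finset.Icc 1 v.length).powerset, G (subword v T) T.card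
      = (v.sublists.map (fun w => G w w.length)).sum := by
  induction v using List.reverseRecOn generalizing G with
  | nil => simp [subword]
  | append_singleton v c ih =>
      have hlen : (v ++ [c]).length = v.length + 1 := by simp
      have hIcc : Finset.Icc 1 (v.length + 1) = insert (v.length + 1) (Finset.Icc 1 v.length) := by
        ext x; simp [Finset.mem_Icc]; omega
      rw [hlen, hIcc, Finset.sum_powerset_insert (by simp [Finset.mem_Icc])]
      rw [List.sublists_concat, List.map_append, List.sum_append, List.map_map]
      congr 1
      · rw [← ih]
        apply Finset.sum_congr rfl
        intro T hT
        rw [subword_concat_not_mem (Finset.mem_powerset.mp hT)]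
      · have key : ∀ T ∈ (Finset.Icc 1 v.length).powerset,
            G (subword (v ++ [c]) (insert (v.length + 1) T)) (insert (v.length + 1) T).card
            = G (subword v T ++ [c]) (T.card + 1) := by
          intro T hT
          have hsub := Finset.mem_powerset.mp hT
          rw [subword_concat_mem hsub]
          congr 1
          rw [Finset.card_insert_of_notMem]
          intro hmem
          have := hsub hmem
          simp [Finset.mem_Icc] at this
        rw [Finset.sum_congr rfl key]
        have := ih (fun w k => G (w ++ [c]) (k + 1))
        rw [this]
        apply congrArg
        apply List.map_congr_left
        intro w _
        simp

def Fam (c : Bool) (u : List Bool) : Prop := ∃ j, u = List.replicate j c ++ [!c]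

lemma goodFactor_iff (u : List Bool) : GoodFactor u ↔ ∃ b, Fam b u := by
  constructor
  · rintro (⟨i, rfl⟩ | ⟨i, rfl⟩)
    · exact ⟨false, i, by simp⟩
    · exact ⟨true, i, by simp⟩
  · rintro ⟨b, j, rfl⟩
    cases b
    · exact Or.inl ⟨j, by simp⟩
    · exact Or.inr ⟨j, by simp⟩

lemma Fam.good {c : Bool} {u : List Bool} (h : Fam c u) : GoodFactor u :=
  (goodFactor_iff u).mpr ⟨c, h⟩

lemma Fam.ne_nil {c : Bool} {u : List Bool} (h : Fam c u) : u ≠ [] := by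
  obtain ⟨j, rfl⟩ := h
  simp

lemma GoodFactor.ne_nil {u : List Bool} (h : GoodFactor u) : u ≠ [] := by
  obtain ⟨b, hb⟩ := (goodFactor_iff u).mp h
  exact hb.ne_nil

lemma Fam.cons_self {c : Bool} {u : List Bool} (h : Fam c u) : Fam c (c :: u) := by
  obtain ⟨j, rfl⟩ := h
  exact ⟨j + 1, by simp [List.replicate_succ]⟩

lemma fam_single (c : Bool) : Fam c [!c] := ⟨0, by simp⟩

lemma good_single (b : Bool) : GoodFactor [b] := by
  have := (fam_single (!b)).good
  simpa using this

/-- A good factor starting with `c` is either `[c]` or `c :: w` with `w` in family `c`. -/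
lemma good_cons_cases {c : Bool} {w : List Bool} (h : GoodFactor (c :: w)) :
    w = [] ∨ Fam c w := by
  obtain ⟨b, j, hb⟩ := (goodFactor_iff _).mp h
  match j, hb with
  | 0, hb =>
      simp at hb
      exact Or.inl hb.2
  | j + 1, hb =>
      rw [List.replicate_succ] at hb
      simp at hb
      obtain ⟨rfl, rfl⟩ := hb
      exact Or.inr ⟨j, rfl⟩

/-- A family-`c` word starting with `c` has tail in family `c`. -/
lemma fam_cons_self_cases {c : Bool} {w : List Bool} (h : Fam c (c :: w)) : Fam c w := by
  obtain ⟨j, hj⟩ := h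
  match j, hj with
  | 0, hj => simp at hj
  | j + 1, hj =>
      rw [List.replicate_succ] at hj
      simp at hj
      exact ⟨j, hj⟩

/-- A family-`c` word starting with `!c` is `[!c]`. -/
lemma fam_cons_not_cases {c : Bool} {w : List Bool} (h : Fam c ((!c) :: w)) : w = [] := by
  obtain ⟨j, hj⟩ := h
  match j, hj with
  | 0, hj => simpa using hj
  | j + 1, hj =>
      rw [List.replicate_succ] at hj
      simp at hj

/-- factor lists with all-but-last factors nonempty are short. -/
lemma length_le_join {L : List (List Bool)} (h : ∀ w ∈ L.dropLast, w ≠ []) :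
    L.length ≤ L.flatten.length + 1 := by
  induction L with
  | nil => simp
  | cons u M ih =>
      match M with
      | [] => simp
      | m :: M' =>
          have hd : (u :: m :: M').dropLast = u :: (m :: M').dropLast :=
            List.dropLast_cons_of_ne_nil (by simp)
          have hu : u ≠ [] := h u (by rw [hd]; exact List.mem_cons_self)
          have h' : ∀ w ∈ (m :: M').dropLast, w ≠ [] := by
            intro w hw
            exact h w (by rw [hd]; exact List.mem_cons_of_mem _ hw)
          have := ih h'
          have hulen : 1 ≤ u.length := by
            cases u
            · simp at hu
            · simp
          simp only [List.flatten_cons, List.length_append, List.length_cons] at *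
          omega

/-- Finiteness of the factorization subtypes. -/
lemma finite_fac {k : ℕ} {v : List Bool} (P : List (List Bool) → Prop)
    (hP : ∀ L, P L → L.length = k ∧ L.flatten = v) : Finite {L // P L} := by
  classical
  let f : {L // P L} → (Fin k → {w // w ∈ v.sublists.toFinset}) :=
    fun L i => ⟨L.1.getD i [], by
      have hlen : (i : ℕ) < L.1.length := by
        rw [(hP L.1 L.2).1]; exact i.2
      rw [List.getD_eq_getElem L.1 [] hlen]
      rw [List.mem_toFinset, List.mem_sublists]
      have hmem : L.1[(i : ℕ)] ∈ L.1 := List.getElem_mem hlen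
      have : L.1[(i : ℕ)] <:+: L.1.flatten := List.infix_of_mem_flatten hmem
      rw [(hP L.1 L.2).2] at this
      exact this.sublist⟩
  have hinj : Function.Injective f := by
    rintro ⟨L1, h1⟩ ⟨L2, h2⟩ hf
    ext1
    apply List.ext_getElem
    · rw [(hP L1 h1).1, (hP L2 h2).1]
    · intro n hn1 hn2
      have hk : n < k := by rw [← (hP L1 h1).1]; exact hn1
      have hval : L1.getD n [] = L2.getD n [] :=
        congrArg Subtype.val (congrFun hf ⟨n, hk⟩)
      rw [List.getD_eq_getElem L1 [] hn1, List.getD_eq_getElem L2 [] hn2] at hval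
      exact hval
  exact Finite.of_injective f hinj


def Pfac (k : ℕ) (v : List Bool) (L : List (List Bool)) : Prop :=
  L.length = k ∧ L.flatten = v ∧ ∀ w ∈ L.dropLast, GoodFactor w

noncomputable def Nk (k : ℕ) (v : List Bool) : ℕ := Nat.card {L : List (List Bool) // Pfac k v L}

noncomputable def Tk (k : ℕ) (v : List Bool) (c : Bool) : ℕ :=
  Nat.card {L : List (List Bool) // Pfac k v L ∧ ∃ u, L.head? = some u ∧ Fam c u}

lemma finite_Pfac (k : ℕ) (v : List Bool) : Finite {L // Pfac k v L} :=
  finite_fac _ (fun _ h => ⟨h.1, h.2.1⟩)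

lemma card_partition {α : Type*} (P q : α → Prop) (hfin : Finite {x // P x}) :
    Nat.card {x // P x}
      = Nat.card {x // P x ∧ q x} + Nat.card {x // P x ∧ ¬ q x} := by
  classical
  haveI := hfin
  calc Nat.card {x // P x}
      = Nat.card ({y : {x // P x} // q y.1} ⊕ {y : {x // P x} // ¬ q y.1}) :=
        Nat.card_congr (Equiv.sumCompl (fun y : {x // P x} => q y.1)).symm
    _ = Nat.card {y : {x // P x} // q y.1} + Nat.card {y : {x // P x} // ¬ q y.1} :=
        Nat.card_sum
    _ = Nat.card {x // P x ∧ q x} + Nat.card {x // P x ∧ ¬ q x} := by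
        rw [Nat.card_congr (Equiv.subtypeSubtypeEquivSubtypeInter P q),
          Nat.card_congr (Equiv.subtypeSubtypeEquivSubtypeInter P (fun x => ¬ q x))]

lemma head?_some_decomp {α : Type*} {L : List α} {u : α} (h : L.head? = some u) :
    ∃ M, L = u :: M := by
  cases L with
  | nil => simp at h
  | cons a M => simp at h; exact ⟨M, by rw [h]⟩

lemma length_decomp {L : List (List Bool)} {k : ℕ} (h : L.length = k + 1) :
    ∃ u M, L = u :: M := by
  cases L with
  | nil => simp at h
  | cons u M => exact ⟨u, M, rfl⟩

/-- N_1(v) = 1. -/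
lemma Nk_one (v : List Bool) : Nk 1 v = 1 := by
  rw [Nk, Nat.card_eq_one_iff_unique]
  constructor
  · constructor
    rintro ⟨L1, h1⟩ ⟨L2, h2⟩
    obtain ⟨a1, rfl⟩ := List.length_eq_one_iff.mp h1.1
    obtain ⟨a2, rfl⟩ := List.length_eq_one_iff.mp h2.1
    have e1 : a1 = v := by simpa using h1.2.1
    have e2 : a2 = v := by simpa using h2.2.1
    subst e1; subst e2; rfl
  · exact ⟨⟨[v], rfl, by simp, by simp⟩⟩

/-- vanishing for large k -/
lemma Nk_zero (k : ℕ) (v : List Bool) (h : v.length + 2 ≤ k) : Nk k v = 0 := by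
  rw [Nk]
  have : IsEmpty {L // Pfac k v L} := by
    constructor
    rintro ⟨L, hlen, hjoin, hgood⟩
    have hb := length_le_join (fun w hw => (hgood w hw).ne_nil)
    rw [hlen, hjoin] at hb
    omega
  exact Nat.card_of_isEmpty

lemma Tk_zero (k : ℕ) (v : List Bool) (c : Bool) (h : v.length + 2 ≤ k) :
    Tk k v c = 0 := by
  rw [Tk]
  have : IsEmpty {L // Pfac k v L ∧ ∃ u, L.head? = some u ∧ Fam c u} := by
    constructor
    rintro ⟨L, ⟨hlen, hjoin, hgood⟩, -⟩
    have hb := length_le_join (fun w hw => (hgood w hw).ne_nil)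
    rw [hlen, hjoin] at hb
    omega
  exact Nat.card_of_isEmpty

def consHead (c : Bool) : List (List Bool) → List (List Bool)
  | [] => []
  | u :: M => (c :: u) :: M

/-- piece 1 of the main recursion -/
lemma card_piece1 (k : ℕ) (hk : 1 ≤ k) (c : Bool) (v : List Bool) :
    Nat.card {L // Pfac (k+1) (c :: v) L ∧ L.head? = some [c]} = Nk k v := by
  rw [Nk]
  symm
  apply Nat.card_congr
  refine Equiv.ofBijective (fun M => ⟨[c] :: M.1, ?_, ?_⟩) ⟨?_, ?_⟩
  · obtain ⟨M, hlen, hjoin, hgood⟩ := M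
    refine ⟨by simp [hlen], by simp [hjoin], ?_⟩
    have hM : M ≠ [] := by intro h; rw [h] at hlen; simp at hlen; omega
    rw [List.dropLast_cons_of_ne_nil hM]
    intro w hmem0
    rw [List.mem_cons] at hmem0
    rcases hmem0 with rfl | hw
    · exact good_single c
    · exact hgood w hw
  · rfl
  · rintro ⟨M1, h1⟩ ⟨M2, h2⟩ h
    have := congrArg Subtype.val h
    simpa using this
  · rintro ⟨L, ⟨hlen, hjoin, hgood⟩, hhead⟩
    obtain ⟨M, rfl⟩ := head?_some_decomp hhead
    have hMlen : M.length = k := by simpa using hlen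
    have hM : M ≠ [] := by intro h; rw [h] at hMlen; simp at hMlen; omega
    have hdl : ([c] :: M).dropLast = [c] :: M.dropLast := List.dropLast_cons_of_ne_nil hM
    refine ⟨⟨M, hMlen, ?_, ?_⟩, rfl⟩
    · simpa using hjoin
    · intro w hw
      exact hgood w (by rw [hdl]; exact List.mem_cons_of_mem _ hw)

/-- piece 2 of the main recursion -/
lemma card_piece2 (k : ℕ) (hk : 1 ≤ k) (c : Bool) (v : List Bool) :
    Nat.card {L // Pfac (k+1) (c :: v) L ∧ ¬ L.head? = some [c]} = Tk (k+1) v c := by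
  rw [Tk]
  symm
  apply Nat.card_congr
  refine Equiv.ofBijective (fun L' => ⟨consHead c L'.1, ?_⟩) ⟨?_, ?_⟩
  · obtain ⟨L', ⟨hlen, hjoin, hgood⟩, u, hhead, hfam⟩ := L'
    obtain ⟨M, rfl⟩ := head?_some_decomp hhead
    have hM : M ≠ [] := by
      intro h; rw [h] at hlen; simp at hlen; omega
    have hch : consHead c (u :: M) = (c :: u) :: M := rfl
    rw [hch]
    have hdl1 : (u :: M).dropLast = u :: M.dropLast := List.dropLast_cons_of_ne_nil hM
    refine ⟨⟨by simpa using hlen, ?_, ?_⟩, ?_⟩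
    · simp only [List.flatten_cons] at hjoin ⊢
      rw [List.cons_append, hjoin]
    · rw [List.dropLast_cons_of_ne_nil hM]
      intro w hmem0
      rw [List.mem_cons] at hmem0
      rcases hmem0 with rfl | hw
      · exact (hfam.cons_self).good
      · exact hgood w (by rw [hdl1]; exact List.mem_cons_of_mem _ hw)
    · simp only [List.head?_cons, Option.some.injEq]
      intro hcu
      have : u = [] := by simpa using hcu
      exact hfam.ne_nil this
  · rintro ⟨L1, h1⟩ ⟨L2, h2⟩ h
    obtain ⟨u1, hh1, -⟩ := h1.2
    obtain ⟨u2, hh2, -⟩ := h2.2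
    obtain ⟨M1, rfl⟩ := head?_some_decomp hh1
    obtain ⟨M2, rfl⟩ := head?_some_decomp hh2
    have := congrArg Subtype.val h
    simp only [consHead] at this
    apply Subtype.ext
    simp at this ⊢
    exact ⟨this.1, this.2⟩
  · rintro ⟨L, ⟨hlen, hjoin, hgood⟩, hhead⟩
    obtain ⟨u, M, rfl⟩ := length_decomp hlen
    have hMlen : M.length = k := by simpa using hlen
    have hM : M ≠ [] := by intro h; rw [h] at hMlen; simp at hMlen; omega
    have hdl : (u :: M).dropLast = u :: M.dropLast := List.dropLast_cons_of_ne_nil hM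
    have hugood : GoodFactor u := hgood u (by rw [hdl]; exact List.mem_cons_self)
    have hune : u ≠ [] := hugood.ne_nil
    obtain ⟨b, w, rfl⟩ := List.exists_cons_of_ne_nil hune
    have hjoin' : b = c ∧ w ++ M.flatten = v := by
      simp only [List.flatten_cons, List.cons_append, List.cons.injEq] at hjoin
      exact hjoin
    obtain ⟨rfl, hwj⟩ := hjoin'
    rcases good_cons_cases hugood with rfl | hfam
    · exact absurd rfl hhead
    · refine ⟨⟨w :: M, ⟨by simpa using hlen, by simpa [List.flatten_cons] using hwj, ?_⟩,
        w, rfl, hfam⟩, rfl⟩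
      rw [List.dropLast_cons_of_ne_nil hM]
      intro y hmem0
      rw [List.mem_cons] at hmem0
      rcases hmem0 with rfl | hy
      · exact hfam.good
      · exact hgood y (by rw [hdl]; exact List.mem_cons_of_mem _ hy)

/-- main recursion for N -/
lemma Nk_rec (k : ℕ) (hk : 1 ≤ k) (c : Bool) (v : List Bool) :
    Nk (k+1) (c :: v) = Nk k v + Tk (k+1) v c := by
  classical
  rw [Nk, card_partition (Pfac (k+1) (c :: v)) (fun L => L.head? = some [c])
    (finite_Pfac _ _), card_piece1 k hk c v, card_piece2 k hk c v]

/-- T recursion, same letter -/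
lemma Tk_cons_same (k : ℕ) (hk : 2 ≤ k) (c : Bool) (v : List Bool) :
    Tk k (c :: v) c = Tk k v c := by
  rw [Tk, Tk]
  symm
  apply Nat.card_congr
  refine Equiv.ofBijective (fun L' => ⟨consHead c L'.1, ?_⟩) ⟨?_, ?_⟩
  · obtain ⟨L', ⟨hlen, hjoin, hgood⟩, u, hhead, hfam⟩ := L'
    obtain ⟨M, rfl⟩ := head?_some_decomp hhead
    have hM : M ≠ [] := by
      intro h; rw [h] at hlen; simp at hlen; omega
    have hch : consHead c (u :: M) = (c :: u) :: M := rfl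
    rw [hch]
    have hdl1 : (u :: M).dropLast = u :: M.dropLast := List.dropLast_cons_of_ne_nil hM
    refine ⟨⟨by simpa using hlen, ?_, ?_⟩, c :: u, rfl, hfam.cons_self⟩
    · simp only [List.flatten_cons] at hjoin ⊢
      rw [List.cons_append, hjoin]
    · rw [List.dropLast_cons_of_ne_nil hM]
      intro w hmem0
      rw [List.mem_cons] at hmem0
      rcases hmem0 with rfl | hw
      · exact (hfam.cons_self).good
      · exact hgood w (by rw [hdl1]; exact List.mem_cons_of_mem _ hw)
  · rintro ⟨L1, h1⟩ ⟨L2, h2⟩ h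
    obtain ⟨u1, hh1, -⟩ := h1.2
    obtain ⟨u2, hh2, -⟩ := h2.2
    obtain ⟨M1, rfl⟩ := head?_some_decomp hh1
    obtain ⟨M2, rfl⟩ := head?_some_decomp hh2
    have := congrArg Subtype.val h
    simp only [consHead] at this
    apply Subtype.ext
    simp at this ⊢
    exact ⟨this.1, this.2⟩
  · rintro ⟨L, ⟨hlen, hjoin, hgood⟩, u, hhead, hfam⟩
    obtain ⟨M, rfl⟩ := head?_some_decomp hhead
    have hMlen : M.length = k - 1 := by simp at hlen; omega
    have hM : M ≠ [] := by intro h; rw [h] at hMlen; simp at hMlen; omega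
    have hdl : (u :: M).dropLast = u :: M.dropLast := List.dropLast_cons_of_ne_nil hM
    obtain ⟨b, w, rfl⟩ := List.exists_cons_of_ne_nil hfam.ne_nil
    have hjoin' : b = c ∧ w ++ M.flatten = v := by
      simp only [List.flatten_cons, List.cons_append, List.cons.injEq] at hjoin
      exact hjoin
    obtain ⟨rfl, hwj⟩ := hjoin'
    have hfamw := fam_cons_self_cases hfam
    refine ⟨⟨w :: M, ⟨by simpa using hlen, by simpa [List.flatten_cons] using hwj, ?_⟩,
      w, rfl, hfamw⟩, rfl⟩
    rw [List.dropLast_cons_of_ne_nil hM]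
    intro y hmem0
    rw [List.mem_cons] at hmem0
    rcases hmem0 with rfl | hy
    · exact hfamw.good
    · exact hgood y (by rw [hdl]; exact List.mem_cons_of_mem _ hy)

/-- T recursion, opposite letter -/
lemma Tk_cons_ne (k : ℕ) (hk : 1 ≤ k) (c : Bool) (v : List Bool) :
    Tk (k+1) ((!c) :: v) c = Nk k v := by
  rw [Tk, Nk]
  symm
  apply Nat.card_congr
  refine Equiv.ofBijective (fun M => ⟨[!c] :: M.1, ?_⟩) ⟨?_, ?_⟩
  · obtain ⟨M, hlen, hjoin, hgood⟩ := M
    have hM : M ≠ [] := by intro h; rw [h] at hlen; simp at hlen; omega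
    refine ⟨⟨by simp [hlen], by simp [hjoin], ?_⟩, [!c], rfl, fam_single c⟩
    rw [List.dropLast_cons_of_ne_nil hM]
    intro w hmem0
    rw [List.mem_cons] at hmem0
    rcases hmem0 with rfl | hw
    · exact (fam_single c).good
    · exact hgood w hw
  · rintro ⟨M1, h1⟩ ⟨M2, h2⟩ h
    have := congrArg Subtype.val h
    apply Subtype.ext
    simpa using this
  · rintro ⟨L, ⟨hlen, hjoin, hgood⟩, u, hhead, hfam⟩
    obtain ⟨M, rfl⟩ := head?_some_decomp hhead
    have hMlen : M.length = k := by simpa using hlen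
    have hM : M ≠ [] := by intro h; rw [h] at hMlen; simp at hMlen; omega
    have hdl : (u :: M).dropLast = u :: M.dropLast := List.dropLast_cons_of_ne_nil hM
    obtain ⟨b, w, rfl⟩ := List.exists_cons_of_ne_nil hfam.ne_nil
    have hjoin' : b = !c ∧ w ++ M.flatten = v := by
      simp only [List.flatten_cons, List.cons_append, List.cons.injEq] at hjoin
      exact hjoin
    obtain ⟨rfl, hwj⟩ := hjoin'
    have hw : w = [] := fam_cons_not_cases hfam
    subst hw
    refine ⟨⟨M, hMlen, by simpa using hwj, ?_⟩, rfl⟩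
    intro y hy
    exact hgood y (by rw [hdl]; exact List.mem_cons_of_mem _ hy)


noncomputable def GG (v : List Bool) : Polynomial ℤ :=
  ∑ k ∈ Finset.Icc 1 (v.length + 1), (Nk k v : Polynomial ℤ) * (X + 1) ^ k

noncomputable def TT (v : List Bool) (c : Bool) : Polynomial ℤ :=
  ∑ k ∈ Finset.Icc 2 (v.length + 1), (Tk k v c : Polynomial ℤ) * (X + 1) ^ k

lemma Icc_one_succ (m : ℕ) : Finset.Icc 1 (m + 1) = insert 1 (Finset.Icc 2 (m + 1)) := by
  ext x; simp [Finset.mem_Icc]; omega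

lemma Icc_two_succ (m : ℕ) : Finset.Icc 2 (m + 2) = insert (m + 2) (Finset.Icc 2 (m + 1)) := by
  ext x; simp [Finset.mem_Icc]; omega

lemma sum_shift (m : ℕ) (f : ℕ → Polynomial ℤ) :
    ∑ k ∈ Finset.Icc 2 (m + 2), f k = ∑ j ∈ Finset.Icc 1 (m + 1), f (j + 1) := by
  have h : Finset.Icc 2 (m + 2) = (Finset.Icc 1 (m + 1)).map (addRightEmbedding 1) := by
    rw [Finset.map_add_right_Icc]
  rw [h, Finset.sum_map]
  rfl

lemma sum_shift_N (v : List Bool) :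
    ∑ k ∈ Finset.Icc 2 (v.length + 2), (Nk (k-1) v : Polynomial ℤ) * (X + 1) ^ k
      = (X + 1) * GG v := by
  rw [sum_shift, GG]
  rw [Finset.mul_sum]
  apply Finset.sum_congr rfl
  intro j hj
  have : j + 1 - 1 = j := rfl
  rw [this, pow_succ]
  ring

lemma GG_rec (c : Bool) (v : List Bool) :
    GG (c :: v) = (X + 1) + (X + 1) * GG v + TT v c := by
  have hlen : (c :: v).length + 1 = v.length + 2 := by simp
  rw [GG, hlen, Icc_one_succ (v.length + 1),
    Finset.sum_insert (by simp [Finset.mem_Icc])]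
  have hterm : (Nk 1 (c :: v) : Polynomial ℤ) * (X + 1) ^ 1 = (X + 1) := by
    rw [Nk_one]; simp
  rw [hterm]
  have hcong : ∀ k ∈ Finset.Icc 2 (v.length + 2),
      (Nk k (c :: v) : Polynomial ℤ) * (X + 1) ^ k
        = (Nk (k-1) v : Polynomial ℤ) * (X + 1) ^ k + (Tk k v c : Polynomial ℤ) * (X + 1) ^ k := by
    intro k hk
    simp only [Finset.mem_Icc] at hk
    obtain ⟨j, rfl⟩ : ∃ j, k = j + 1 := ⟨k - 1, by omega⟩
    rw [Nk_rec j (by omega) c v]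
    push_cast
    ring
  rw [Finset.sum_congr rfl hcong, Finset.sum_add_distrib, sum_shift_N]
  have hT : ∑ k ∈ Finset.Icc 2 (v.length + 2), (Tk k v c : Polynomial ℤ) * (X + 1) ^ k
      = TT v c := by
    rw [Icc_two_succ, Finset.sum_insert (by simp [Finset.mem_Icc])]
    rw [Tk_zero (v.length + 2) v c (by omega)]
    simp [TT]
  rw [hT]
  ring

lemma TT_cons_same (c : Bool) (v : List Bool) : TT (c :: v) c = TT v c := by
  have hlen : (c :: v).length + 1 = v.length + 2 := by simp
  rw [TT, hlen]
  have hcong : ∀ k ∈ Finset.Icc 2 (v.length + 2),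
      (Tk k (c :: v) c : Polynomial ℤ) * (X + 1) ^ k
        = (Tk k v c : Polynomial ℤ) * (X + 1) ^ k := by
    intro k hk
    simp only [Finset.mem_Icc] at hk
    rw [Tk_cons_same k (by omega) c v]
  rw [Finset.sum_congr rfl hcong, Icc_two_succ,
    Finset.sum_insert (by simp [Finset.mem_Icc]),
    Tk_zero (v.length + 2) v c (by omega)]
  simp [TT]

lemma TT_cons_ne (c a : Bool) (v : List Bool) (h : a ≠ c) :
    TT (c :: v) a = (X + 1) * GG v := by
  have hc : c = !a := by cases a <;> cases c <;> simp_all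
  subst hc
  have hlen : ((!a) :: v).length + 1 = v.length + 2 := by simp
  rw [TT, hlen]
  have hcong : ∀ k ∈ Finset.Icc 2 (v.length + 2),
      (Tk k ((!a) :: v) a : Polynomial ℤ) * (X + 1) ^ k
        = (Nk (k-1) v : Polynomial ℤ) * (X + 1) ^ k := by
    intro k hk
    simp only [Finset.mem_Icc] at hk
    obtain ⟨j, rfl⟩ : ∃ j, k = j + 1 := ⟨k - 1, by omega⟩
    rw [Tk_cons_ne j (by omega) a v]
    rfl
  rw [Finset.sum_congr rfl hcong, sum_shift_N]

lemma GG_nil : GG [] = X + 1 := by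
  rw [GG]
  simp [Nk_one]

lemma TT_nil (a : Bool) : TT [] a = 0 := by
  rw [TT]
  simp

lemma main_ind (v : List Bool) :
    Fp v = GG v ∧ ∀ a, Bp v a = (X + 1) + TT v a := by
  induction v with
  | nil =>
      refine ⟨by rw [Fp_nil, GG_nil], fun a => by rw [Bp_nil, TT_nil, add_zero]⟩
  | cons c v ih =>
      obtain ⟨ihF, ihB⟩ := ih
      constructor
      · rw [Fp_cons, ihF, ihB c, GG_rec]
        ring
      · intro a
        by_cases hac : a = c
        · subst hac
          rw [Bp_cons_same, ihB a, TT_cons_same]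
        · rw [Bp_cons_ne c a v hac, TT_cons_ne c a v hac]
          have hsum := Bp_add v a c hac
          have : Bp v a + Bp v c = Fp v + (X + 1) := hsum
          have hgoal : Bp v a + (X * Fp v + Bp v c) = (X + 1) + (X + 1) * Fp v := by
            linear_combination hsum
          rw [hgoal, ihF]

lemma fPoly_eq_Fp (v : List Bool) : fPoly v = 1 + Fp v := by
  rw [fPoly]
  congr 1
  have h := powerset_sum_eq_sublists_sum v
    (fun w k => (X + 1) ^ kappa w * X ^ (k + 1 - kappa w))
  rw [h]
  have h2 : List.map (fun w => (X + 1) ^ kappa w * X ^ (w.length + 1 - kappa w)) v.sublists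
      = List.map gg v.sublists := by
    apply List.map_congr_left
    intro w _
    rfl
  rw [h2, Fp]
  exact ((v.sublists_perm_sublists').map gg).sum_eq

/-- `F(v) = 1 + ∑ (t+1)^k`, summed over factorizations
`v = u_1 ⋯ u_k` with `u_1,…,u_{k-1}` of the form `x^i y` or `y^i x`. -/
theorem stmt11 (v : List Bool) :
    fPoly v = 1 + ∑ k ∈ Finset.Icc 1 (v.length + 1),
      (Nat.card {L : List (List Bool) //
          L.length = k ∧ L.flatten = v ∧ ∀ w ∈ L.dropLast, GoodFactor w} : Polynomial ℤ) *
        (Polynomial.X + 1) ^ k := by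
  rw [fPoly_eq_Fp v, (main_ind v).1]
  simp only [GG, Nk, Pfac]
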